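/- The map φ takes values in NS(Syz F) and is a bijection from LT(I) onto NS(Syz F). Moreover, its inverse is given explicitly by φ⁻¹(σ) = min{t ∈ 𝕋ⁿ : there exists f ∈ I \ {0} with LT(f) = t and S(f) = σ} for every σ ∈ NS(Syz F), the minimum being taken with respect to μ (which is a well-order on 𝕋ⁿ since it is admissible). -/

import Mathlib

open MvPolynomial

namespace F5

noncomputable section
open scoped Classical

/-- Monomials (power products) in `n` variables, represented by exponent vectors. -/
abbrev Mon (n : ℕ) : Type := Fin n →₀ ℕ

/-- Module terms `t·eₗ` of the free module `Pᵐ`. -/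
abbrev MTerm (n m : ℕ) : Type := (Fin n →₀ ℕ) × Fin m

/-- Action of a monomial on a module term: `u • (t eₗ) = (u t) eₗ`. -/
def mact {n m : ℕ} (u : Mon n) (σ : MTerm n m) : MTerm n m := (u + σ.1, σ.2)

/-- An admissible order on monomials: a linear order with `1 ≤ t` and
compatibility with multiplication. -/
structure AdmissibleOrder (n : ℕ) where
  ord : LinearOrder (Mon n)
  one_le : ∀ t : Mon n, ord.le 0 t
  mul_lt_mul : ∀ s t u : Mon n, ord.lt s t → ord.lt (u + s) (u + t)

/-- An admissible module order on module terms: a linear well-order compatible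
with the monomial action, and such that `σ ≤ u σ`. -/
structure ModuleOrder (n m : ℕ) where
  ord : LinearOrder (MTerm n m)
  wf : WellFounded ord.lt
  mul_lt_mul : ∀ (σ τ : MTerm n m) (u : Mon n), ord.lt σ τ → ord.lt (mact u σ) (mact u τ)
  le_mul : ∀ (σ : MTerm n m) (u : Mon n), ord.le σ (mact u σ)

variable {k : Type*} [Field k] {n m : ℕ}

/-- The leading monomial of a polynomial with respect to `μ` (junk value `0` for `f = 0`). -/
noncomputable def pLT (μ : AdmissibleOrder n) (f : MvPolynomial (Fin n) k) : Mon n :=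
  if h : f.support.Nonempty then @Finset.max' _ μ.ord f.support h else 0

/-- The leading coefficient of a polynomial with respect to `μ`. -/
noncomputable def pLC (μ : AdmissibleOrder n) (f : MvPolynomial (Fin n) k) : k :=
  f.coeff (pLT μ f)

/-- The set (finset) of module terms occurring in an element of `Pᵐ`. -/
noncomputable def msupport (u : Fin m → MvPolynomial (Fin n) k) : Finset (MTerm n m) :=
  letI := Classical.decEq (MTerm n m)
  Finset.univ.biUnion fun l => (u l).support.image fun t => (t, l)

/-- A junk default module term (needs `m ≠ 0`). -/
def mdefault [NeZero m] : MTerm n m := (0, ⟨0, Nat.pos_of_ne_zero (NeZero.ne m)⟩)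

/-- The leading module term of a nonzero element of `Pᵐ` with respect to `μ'`
(junk value for `0`). -/
noncomputable def mLT [NeZero m] (μ' : ModuleOrder n m) (u : Fin m → MvPolynomial (Fin n) k) :
    MTerm n m :=
  if h : (msupport u).Nonempty then @Finset.max' _ μ'.ord _ h else mdefault

/-- The map `v : Pᵐ → P`, `v(eᵢ) = fᵢ`. -/
noncomputable def vmap (F : Fin m → MvPolynomial (Fin n) k)
    (u : Fin m → MvPolynomial (Fin n) k) : MvPolynomial (Fin n) k :=
  ∑ i, u i * F i

/-- The ideal `I = (f₁, …, fₘ)`. -/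
noncomputable def idealI (F : Fin m → MvPolynomial (Fin n) k) : Ideal (MvPolynomial (Fin n) k) :=
  Ideal.span (Set.range F)

/-- `LT(Syz F)`: leading module terms of nonzero syzygies of `F`. -/
def LTSyz [NeZero m] (μ' : ModuleOrder n m) (F : Fin m → MvPolynomial (Fin n) k) :
    Set (MTerm n m) :=
  {σ | ∃ s : Fin m → MvPolynomial (Fin n) k, s ≠ 0 ∧ vmap F s = 0 ∧ mLT μ' s = σ}

/-- The signature `S(f)`: the `μ'`-minimum of `{LT(u) : v(u) = f}` (junk for `f = 0` or
`f ∉ I`). -/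
noncomputable def sig [NeZero m] (μ' : ModuleOrder n m) (F : Fin m → MvPolynomial (Fin n) k)
    (f : MvPolynomial (Fin n) k) : MTerm n m :=
  if hne : {σ : MTerm n m |
      ∃ u : Fin m → MvPolynomial (Fin n) k, u ≠ 0 ∧ vmap F u = f ∧ mLT μ' u = σ}.Nonempty
  then μ'.wf.min _ hne else mdefault

/-- `f` S-reduces to `g` with `h`, with respect to `σ`. -/
noncomputable def SReduces [NeZero m] (μ : AdmissibleOrder n) (μ' : ModuleOrder n m)
    (F : Fin m → MvPolynomial (Fin n) k)
    (f h g : MvPolynomial (Fin n) k) (σ : MTerm n m) : Prop :=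
  ∃ (t : Mon n) (α : k), α ≠ 0 ∧ g = f - (monomial t α) * h ∧
    (g = 0 ∨ μ.ord.lt (pLT μ g) (pLT μ f)) ∧
    μ'.ord.lt (sig μ' F ((monomial t (1 : k)) * h)) σ

/-- `f` is S-irreducible with respect to `σ`. -/
noncomputable def SIrr [NeZero m] (μ : AdmissibleOrder n) (μ' : ModuleOrder n m)
    (F : Fin m → MvPolynomial (Fin n) k) (f : MvPolynomial (Fin n) k) (σ : MTerm n m) : Prop :=
  f = 0 ∨ ¬ ∃ h : MvPolynomial (Fin n) k, h ∈ idealI F ∧ h ≠ 0 ∧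
    ∃ g : MvPolynomial (Fin n) k, SReduces μ μ' F f h g σ

/-- `G` is an S-Gröbner basis (of `I` w.r.t. `μ`, `F`, `μ'`). -/
noncomputable def IsSGB [NeZero m] (μ : AdmissibleOrder n) (μ' : ModuleOrder n m)
    (F : Fin m → MvPolynomial (Fin n) k) (G : Set (MvPolynomial (Fin n) k)) : Prop :=
  (∀ g ∈ G, g ∈ idealI F ∧ g ≠ 0) ∧
  ∀ f : MvPolynomial (Fin n) k, f ∈ idealI F → f ≠ 0 → SIrr μ μ' F f (sig μ' F f) →
    ∃ g ∈ G, ∃ t : Mon n,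
      pLT μ ((monomial t (1 : k)) * g) = pLT μ f ∧
      sig μ' F ((monomial t (1 : k)) * g) = sig μ' F f

/-- `LT(I)`: the set of leading monomials of nonzero elements of `I`. -/
def LTIdeal (μ : AdmissibleOrder n) (F : Fin m → MvPolynomial (Fin n) k) : Set (Mon n) :=
  {t | ∃ f : MvPolynomial (Fin n) k, f ∈ idealI F ∧ f ≠ 0 ∧ pLT μ f = t}

/-- `φ(t)`: the `μ'`-minimum signature of nonzero elements of `I` with leading monomial `t`. -/
noncomputable def phi [NeZero m] (μ : AdmissibleOrder n) (μ' : ModuleOrder n m)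
    (F : Fin m → MvPolynomial (Fin n) k) (t : Mon n) : MTerm n m :=
  if hne : {σ : MTerm n m | ∃ f : MvPolynomial (Fin n) k,
      f ∈ idealI F ∧ f ≠ 0 ∧ pLT μ f = t ∧ sig μ' F f = σ}.Nonempty
  then μ'.wf.min _ hne else mdefault

/-- `f` is a primitive S-irreducible polynomial. -/
noncomputable def PrimSIrr [NeZero m] (μ : AdmissibleOrder n) (μ' : ModuleOrder n m)
    (F : Fin m → MvPolynomial (Fin n) k) (f : MvPolynomial (Fin n) k) : Prop :=
  f ∈ idealI F ∧ f ≠ 0 ∧ SIrr μ μ' F f (sig μ' F f) ∧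
  ¬ ∃ (f' : MvPolynomial (Fin n) k) (t : Mon n),
      f' ∈ idealI F ∧ f' ≠ 0 ∧ t ≠ 0 ∧ SIrr μ μ' F f' (sig μ' F f') ∧
      pLT μ ((monomial t (1 : k)) * f') = pLT μ f ∧
      sig μ' F ((monomial t (1 : k)) * f') = sig μ' F f

/-- The lcm of two monomials (pointwise maximum of exponents). -/
def lcmMon {n : ℕ} (s t : Mon n) : Mon n := t + (s - t)

/-- The term `u₁ = lcm(LT g₁, LT g₂)/(LC g₁ · LT g₁)` (when the first argument is `g₁`). -/
noncomputable def uterm (μ : AdmissibleOrder n) (g₁ g₂ : MvPolynomial (Fin n) k) :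
    MvPolynomial (Fin n) k :=
  monomial (lcmMon (pLT μ g₁) (pLT μ g₂) - pLT μ g₁) (pLC μ g₁)⁻¹

/-- The S-polynomial of `g₁` and `g₂`. -/
noncomputable def Spol (μ : AdmissibleOrder n) (g₁ g₂ : MvPolynomial (Fin n) k) :
    MvPolynomial (Fin n) k :=
  uterm μ g₁ g₂ * g₁ - uterm μ g₂ g₁ * g₂

/-- `(g₁, g₂)` is a normal pair. -/
noncomputable def NormalPair [NeZero m] (μ : AdmissibleOrder n) (μ' : ModuleOrder n m)
    (F : Fin m → MvPolynomial (Fin n) k) (g₁ g₂ : MvPolynomial (Fin n) k) : Prop :=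
  PrimSIrr μ μ' F g₁ ∧ PrimSIrr μ μ' F g₂ ∧
  sig μ' F (uterm μ g₁ g₂ * g₁) =
    mact (lcmMon (pLT μ g₁) (pLT μ g₂) - pLT μ g₁) (sig μ' F g₁) ∧
  sig μ' F (uterm μ g₂ g₁ * g₂) =
    mact (lcmMon (pLT μ g₂) (pLT μ g₁) - pLT μ g₂) (sig μ' F g₂) ∧
  sig μ' F (uterm μ g₁ g₂ * g₁) ≠ sig μ' F (uterm μ g₂ g₁ * g₂)


end
end F5

open F5 MvPolynomial

section F5Aux
open F5 MvPolynomial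

variable {k : Type*} [Field k] {n m : ℕ}

private lemma pLT_mem' (μ : AdmissibleOrder n) {f : MvPolynomial (Fin n) k} (hf : f ≠ 0) :
    pLT μ f ∈ f.support := by
  have h : f.support.Nonempty := MvPolynomial.support_nonempty.2 hf
  rw [pLT, dif_pos h]
  exact @Finset.max'_mem _ μ.ord _ h

private lemma le_pLT' (μ : AdmissibleOrder n) {f : MvPolynomial (Fin n) k} {t : Mon n}
    (ht : t ∈ f.support) : μ.ord.le t (pLT μ f) := by
  have h : f.support.Nonempty := ⟨t, ht⟩
  rw [pLT, dif_pos h]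
  exact @Finset.le_max' _ μ.ord _ _ ht

private lemma pLT_lt' (μ : AdmissibleOrder n) {f : MvPolynomial (Fin n) k} (hf : f ≠ 0)
    {t : Mon n} (h2 : ∀ s ∈ f.support, μ.ord.le s t) (h3 : t ∉ f.support) :
    μ.ord.lt (pLT μ f) t :=
  @lt_of_le_of_ne _ μ.ord.toPartialOrder _ _ (h2 _ (pLT_mem' μ hf))
    (fun h => h3 (h ▸ pLT_mem' μ hf))

private lemma mu_le_of_le (μ : AdmissibleOrder n) {s t : Mon n} (h : s ≤ t) : μ.ord.le s t := by
  obtain ⟨d, rfl⟩ := le_iff_exists_add.1 h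
  rcases eq_or_ne d 0 with rfl | hd
  · rw [add_zero]; exact @le_refl _ μ.ord.toPreorder s
  · have h0 : μ.ord.lt 0 d := @lt_of_le_of_ne _ μ.ord.toPartialOrder _ _ (μ.one_le d) (Ne.symm hd)
    have h1 := μ.mul_lt_mul 0 d s h0
    rw [add_zero] at h1
    exact @le_of_lt _ μ.ord.toPreorder _ _ h1

private lemma mu_wf (μ : AdmissibleOrder n) : WellFounded μ.ord.lt := by
  rw [RelEmbedding.wellFounded_iff_isEmpty]
  constructor
  intro g
  obtain ⟨i, j, hij, hle⟩ := wellQuasiOrdered_le (α := Mon n) (fun i => g i)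
  have h1 : μ.ord.le (g i) (g j) := mu_le_of_le μ hle
  have h2 : μ.ord.lt (g j) (g i) := g.map_rel_iff.2 hij
  exact absurd h2 ((@not_lt _ μ.ord _ _).2 h1)

/-- coefficient of a module term in an element of `Pᵐ` -/
private def mcoeff (σ : MTerm n m) (u : Fin m → MvPolynomial (Fin n) k) : k :=
  (u σ.2).coeff σ.1

private lemma mem_msupport {σ : MTerm n m} {u : Fin m → MvPolynomial (Fin n) k} :
    σ ∈ msupport u ↔ mcoeff σ u ≠ 0 := by
  classical
  simp only [msupport, Finset.mem_biUnion, Finset.mem_univ, true_and, Finset.mem_image,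
    MvPolynomial.mem_support_iff]
  constructor
  · rintro ⟨l, t, ht, rfl⟩; exact ht
  · intro h; exact ⟨σ.2, σ.1, h, rfl⟩

private lemma msupport_nonempty {u : Fin m → MvPolynomial (Fin n) k} :
    (msupport u).Nonempty ↔ u ≠ 0 := by
  constructor
  · rintro ⟨σ, hσ⟩ h0
    rw [mem_msupport] at hσ
    apply hσ
    rw [h0]
    simp [mcoeff]
  · intro hu
    have hex : ∃ i, u i ≠ 0 := by
      by_contra h
      push_neg at h
      exact hu (funext h)
    obtain ⟨i, hi⟩ := hex
    obtain ⟨t, ht⟩ := MvPolynomial.support_nonempty.2 hi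
    exact ⟨(t, i), mem_msupport.2 (by simpa [mcoeff] using MvPolynomial.mem_support_iff.1 ht)⟩

variable [NeZero m]

private lemma mLT_mem' (μ' : ModuleOrder n m) {u : Fin m → MvPolynomial (Fin n) k}
    (hu : u ≠ 0) : mLT μ' u ∈ msupport u := by
  have h : (msupport u).Nonempty := msupport_nonempty.2 hu
  rw [mLT, dif_pos h]
  exact @Finset.max'_mem _ μ'.ord _ h

private lemma le_mLT' (μ' : ModuleOrder n m) {u : Fin m → MvPolynomial (Fin n) k}
    {σ : MTerm n m} (h : σ ∈ msupport u) : μ'.ord.le σ (mLT μ' u) := by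
  have hne : (msupport u).Nonempty := ⟨σ, h⟩
  rw [mLT, dif_pos hne]
  exact @Finset.le_max' _ μ'.ord _ _ h

private lemma mLT_eq' (μ' : ModuleOrder n m) {u : Fin m → MvPolynomial (Fin n) k}
    {σ : MTerm n m} (h1 : σ ∈ msupport u) (h2 : ∀ τ ∈ msupport u, μ'.ord.le τ σ) :
    mLT μ' u = σ := by
  have hu : u ≠ 0 := msupport_nonempty.1 ⟨σ, h1⟩
  exact @le_antisymm _ μ'.ord.toPartialOrder _ _ (h2 _ (mLT_mem' μ' hu)) (le_mLT' μ' h1)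

private lemma mLT_lt' (μ' : ModuleOrder n m) {u : Fin m → MvPolynomial (Fin n) k}
    (hu : u ≠ 0) {σ : MTerm n m} (h2 : ∀ τ ∈ msupport u, μ'.ord.le τ σ)
    (h3 : σ ∉ msupport u) : μ'.ord.lt (mLT μ' u) σ :=
  @lt_of_le_of_ne _ μ'.ord.toPartialOrder _ _ (h2 _ (mLT_mem' μ' hu))
    (fun h => h3 (h ▸ mLT_mem' μ' hu))

/-- the combination `u - C c • w` -/
private noncomputable def comb (c : k) (u w : Fin m → MvPolynomial (Fin n) k) :
    Fin m → MvPolynomial (Fin n) k :=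
  fun i => u i - MvPolynomial.C c * w i

private lemma vmap_comb (F : Fin m → MvPolynomial (Fin n) k) (c : k)
    (u w : Fin m → MvPolynomial (Fin n) k) :
    vmap F (comb c u w) = vmap F u - MvPolynomial.C c * vmap F w := by
  simp [vmap, comb, sub_mul, mul_assoc, Finset.sum_sub_distrib, Finset.mul_sum]

private lemma vmap_zero (F : Fin m → MvPolynomial (Fin n) k) :
    vmap F (0 : Fin m → MvPolynomial (Fin n) k) = 0 := by
  simp [vmap]

private lemma mcoeff_comb (c : k) (u w : Fin m → MvPolynomial (Fin n) k) (σ : MTerm n m) :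
    mcoeff σ (comb c u w) = mcoeff σ u - c * mcoeff σ w := by
  simp [mcoeff, comb, MvPolynomial.coeff_sub, MvPolynomial.coeff_C_mul]

private lemma msupport_comb_subset {c : k} {u w : Fin m → MvPolynomial (Fin n) k} :
    msupport (comb c u w) ⊆ msupport u ∪ msupport w := by
  intro σ hσ
  rw [mem_msupport] at hσ
  by_cases h1 : mcoeff σ u = 0
  · refine Finset.mem_union_right _ (mem_msupport.2 fun h2 => hσ ?_)
    rw [mcoeff_comb, h1, h2]; ring
  · exact Finset.mem_union_left _ (mem_msupport.2 h1)

private lemma vmap_mem (F u : Fin m → MvPolynomial (Fin n) k) : vmap F u ∈ idealI F :=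
  Ideal.sum_mem _ fun i _ => Ideal.mul_mem_left _ _ (Ideal.subset_span ⟨i, rfl⟩)

private lemma sigSet_nonempty (μ' : ModuleOrder n m) (F : Fin m → MvPolynomial (Fin n) k)
    {f : MvPolynomial (Fin n) k} (hf : f ∈ idealI F) (h0 : f ≠ 0) :
    {σ : MTerm n m |
      ∃ u : Fin m → MvPolynomial (Fin n) k, u ≠ 0 ∧ vmap F u = f ∧ mLT μ' u = σ}.Nonempty := by
  rw [idealI] at hf
  obtain ⟨c, hc⟩ := (Submodule.mem_span_range_iff_exists_fun _).1 hf
  have hv : vmap F c = f := by simpa [vmap, smul_eq_mul] using hc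
  have hcne : c ≠ 0 := by
    rintro rfl
    rw [vmap_zero] at hv
    exact h0 hv.symm
  exact ⟨mLT μ' c, c, hcne, hv, rfl⟩

private lemma sig_spec (μ' : ModuleOrder n m) (F : Fin m → MvPolynomial (Fin n) k)
    {f : MvPolynomial (Fin n) k} (hf : f ∈ idealI F) (h0 : f ≠ 0) :
    ∃ u : Fin m → MvPolynomial (Fin n) k, u ≠ 0 ∧ vmap F u = f ∧ mLT μ' u = sig μ' F f := by
  have hne := sigSet_nonempty μ' F hf h0
  rw [sig, dif_pos hne]
  exact μ'.wf.min_mem _ hne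

private lemma sig_le (μ' : ModuleOrder n m) (F : Fin m → MvPolynomial (Fin n) k)
    {f : MvPolynomial (Fin n) k} {u : Fin m → MvPolynomial (Fin n) k}
    (hu : u ≠ 0) (hv : vmap F u = f) :
    μ'.ord.le (sig μ' F f) (mLT μ' u) := by
  have hmem : mLT μ' u ∈ {σ : MTerm n m |
      ∃ u : Fin m → MvPolynomial (Fin n) k, u ≠ 0 ∧ vmap F u = f ∧ mLT μ' u = σ} :=
    ⟨u, hu, hv, rfl⟩
  have hne := Set.nonempty_of_mem hmem
  rw [sig, dif_pos hne]
  exact (@not_lt _ μ'.ord _ _).1 (μ'.wf.not_lt_min _ hmem)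

/-- Key lemma: if `σ ∉ LT(Syz F)`, `u` has nonzero coefficient at `σ` and all of its
terms are `≤ σ`, then `v(u) ≠ 0` and `S(v(u)) = σ`. -/
private lemma lemA (μ' : ModuleOrder n m) (F : Fin m → MvPolynomial (Fin n) k)
    {σ : MTerm n m} (hσ : σ ∉ LTSyz μ' F)
    {u : Fin m → MvPolynomial (Fin n) k} (hc : mcoeff σ u ≠ 0)
    (hmax : ∀ τ ∈ msupport u, μ'.ord.le τ σ)
    {f : MvPolynomial (Fin n) k} (hv : vmap F u = f) :
    f ≠ 0 ∧ sig μ' F f = σ := by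
  have hσu : σ ∈ msupport u := mem_msupport.2 hc
  have hu0 : u ≠ 0 := msupport_nonempty.1 ⟨σ, hσu⟩
  have hmLTu : mLT μ' u = σ := mLT_eq' μ' hσu hmax
  have hf0 : f ≠ 0 := fun h => hσ ⟨u, hu0, h ▸ hv, hmLTu⟩
  refine ⟨hf0, ?_⟩
  have hle : μ'.ord.le (sig μ' F f) σ := hmLTu ▸ sig_le μ' F hu0 hv
  by_contra hne
  have hlt : μ'.ord.lt (sig μ' F f) σ := @lt_of_le_of_ne _ μ'.ord.toPartialOrder _ _ hle hne
  obtain ⟨w, hw0, hwv, hwLT⟩ := sig_spec μ' F (hv ▸ vmap_mem F u) hf0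
  have hσw : σ ∉ msupport w := by
    intro h
    have h1 := le_mLT' μ' h
    rw [hwLT] at h1
    exact absurd hlt ((@not_lt _ μ'.ord _ _).2 h1)
  set d := comb (1 : k) u w with hd
  have hcd : mcoeff σ d ≠ 0 := by
    rw [hd, mcoeff_comb]
    rw [mem_msupport, not_not] at hσw
    rw [hσw, mul_zero, sub_zero]
    exact hc
  have hσd : σ ∈ msupport d := mem_msupport.2 hcd
  have hvd : vmap F d = 0 := by
    rw [hd, vmap_comb, hv, hwv, map_one, one_mul, sub_self]
  have hd0 : d ≠ 0 := msupport_nonempty.1 ⟨σ, hσd⟩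
  have hdmax : ∀ τ ∈ msupport d, μ'.ord.le τ σ := by
    intro τ hτ
    rcases Finset.mem_union.1 (msupport_comb_subset hτ) with h | h
    · exact hmax τ h
    · have h1 := le_mLT' μ' h
      rw [hwLT] at h1
      exact @le_of_lt _ μ'.ord.toPreorder _ _
        (@lt_of_le_of_lt _ μ'.ord.toPreorder _ _ _ h1 hlt)
  exact hσ ⟨d, hd0, hvd, mLT_eq' μ' hσd hdmax⟩

private lemma sig_not_mem_LTSyz (μ' : ModuleOrder n m) (F : Fin m → MvPolynomial (Fin n) k)
    {f : MvPolynomial (Fin n) k} (hf : f ∈ idealI F) (h0 : f ≠ 0) :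
    sig μ' F f ∉ LTSyz μ' F := by
  rintro ⟨s, hs0, hsv, hsLT⟩
  obtain ⟨u, hu0, huv, huLT⟩ := sig_spec μ' F hf h0
  set σ := sig μ' F f with hσ
  have ha : mcoeff σ u ≠ 0 := mem_msupport.1 (huLT ▸ mLT_mem' μ' hu0)
  have hb : mcoeff σ s ≠ 0 := mem_msupport.1 (hsLT ▸ mLT_mem' μ' hs0)
  set d := comb (mcoeff σ u / mcoeff σ s) u s with hd
  have hdv : vmap F d = f := by rw [hd, vmap_comb, huv, hsv, mul_zero, sub_zero]
  have hd0 : d ≠ 0 := by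
    intro h
    rw [h, vmap_zero] at hdv
    exact h0 hdv.symm
  have hσd : σ ∉ msupport d := by
    rw [mem_msupport, not_not, hd, mcoeff_comb, div_mul_cancel₀ _ hb, sub_self]
  have hdmax : ∀ τ ∈ msupport d, μ'.ord.le τ σ := by
    intro τ hτ
    rcases Finset.mem_union.1 (msupport_comb_subset hτ) with h | h
    · exact huLT ▸ le_mLT' μ' h
    · exact hsLT ▸ le_mLT' μ' h
  have hdlt : μ'.ord.lt (mLT μ' d) σ := mLT_lt' μ' hd0 hdmax hσd
  have hge : μ'.ord.le σ (mLT μ' d) := hσ ▸ sig_le μ' F hd0 hdv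
  exact absurd hdlt ((@not_lt _ μ'.ord _ _).2 hge)

private lemma phi_spec (μ : AdmissibleOrder n) (μ' : ModuleOrder n m)
    (F : Fin m → MvPolynomial (Fin n) k) {t : Mon n} (h : t ∈ LTIdeal μ F) :
    ∃ f : MvPolynomial (Fin n) k,
      f ∈ idealI F ∧ f ≠ 0 ∧ pLT μ f = t ∧ sig μ' F f = phi μ μ' F t := by
  obtain ⟨f, hfI, hf0, hft⟩ := h
  have hne : {σ : MTerm n m | ∃ f : MvPolynomial (Fin n) k,
      f ∈ idealI F ∧ f ≠ 0 ∧ pLT μ f = t ∧ sig μ' F f = σ}.Nonempty :=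
    ⟨sig μ' F f, f, hfI, hf0, hft, rfl⟩
  rw [phi, dif_pos hne]
  exact μ'.wf.min_mem _ hne

private lemma phi_le (μ : AdmissibleOrder n) (μ' : ModuleOrder n m)
    (F : Fin m → MvPolynomial (Fin n) k) {t : Mon n} {f : MvPolynomial (Fin n) k}
    (hfI : f ∈ idealI F) (hf0 : f ≠ 0) (hft : pLT μ f = t) :
    μ'.ord.le (phi μ μ' F t) (sig μ' F f) := by
  have hmem : sig μ' F f ∈ {σ : MTerm n m | ∃ f : MvPolynomial (Fin n) k,
      f ∈ idealI F ∧ f ≠ 0 ∧ pLT μ f = t ∧ sig μ' F f = σ} := ⟨f, hfI, hf0, hft, rfl⟩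
  have hne := Set.nonempty_of_mem hmem
  rw [phi, dif_pos hne]
  exact (@not_lt _ μ'.ord _ _).1 (μ'.wf.not_lt_min _ hmem)

end F5Aux

/-- `φ` is a bijection from `LT(I)` onto `NS(Syz F)`, and for `σ ∈ NS(Syz F)`
the inverse is the `μ`-minimum of `{t : ∃ f ∈ I \ {0}, LT(f) = t, S(f) = σ}`. -/
theorem stmt_6 {k : Type*} [Field k] {n m : ℕ} [NeZero m]
    (μ : AdmissibleOrder n) (μ' : ModuleOrder n m)
    (F : Fin m → MvPolynomial (Fin n) k) :
    Set.BijOn (phi μ μ' F) (LTIdeal μ F) {σ : MTerm n m | σ ∉ LTSyz μ' F} ∧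
    ∀ σ : MTerm n m, σ ∉ LTSyz μ' F →
      ∃ t₀ : Mon n,
        (∃ f : MvPolynomial (Fin n) k,
            f ∈ idealI F ∧ f ≠ 0 ∧ pLT μ f = t₀ ∧ sig μ' F f = σ) ∧
        (∀ t : Mon n,
            (∃ f : MvPolynomial (Fin n) k,
              f ∈ idealI F ∧ f ≠ 0 ∧ pLT μ f = t ∧ sig μ' F f = σ) →
            μ.ord.le t₀ t) ∧
        phi μ μ' F t₀ = σ := by
  classical
  have key2 : ∀ σ : MTerm n m, σ ∉ LTSyz μ' F →
      ∃ t₀ : Mon n,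
        (∃ f : MvPolynomial (Fin n) k,
            f ∈ idealI F ∧ f ≠ 0 ∧ pLT μ f = t₀ ∧ sig μ' F f = σ) ∧
        (∀ t : Mon n,
            (∃ f : MvPolynomial (Fin n) k,
              f ∈ idealI F ∧ f ≠ 0 ∧ pLT μ f = t ∧ sig μ' F f = σ) →
            μ.ord.le t₀ t) ∧
        phi μ μ' F t₀ = σ := by
    intro σ hσ
    -- Step 1: construct some `f ∈ I \ {0}` with `S(f) = σ`.
    set u : Fin m → MvPolynomial (Fin n) k :=
      fun i => if i = σ.2 then MvPolynomial.monomial σ.1 (1 : k) else 0 with hu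
    have hcu : mcoeff σ u ≠ 0 := by
      simp [mcoeff, hu, MvPolynomial.coeff_monomial]
    have hcoeff : ∀ τ : MTerm n m, τ ≠ σ → mcoeff τ u = 0 := by
      intro τ hne
      simp only [mcoeff, hu]
      by_cases h2 : τ.2 = σ.2
      · rw [if_pos h2, MvPolynomial.coeff_monomial, if_neg]
        intro h1
        exact hne (Prod.ext h1.symm h2)
      · rw [if_neg h2, MvPolynomial.coeff_zero]
    have humax : ∀ τ ∈ msupport u, μ'.ord.le τ σ := by
      intro τ hτ
      rw [mem_msupport] at hτ
      have hτσ : τ = σ := by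
        by_contra hne
        exact hτ (hcoeff τ hne)
      rw [hτσ]
      exact @le_refl _ μ'.ord.toPreorder σ
    obtain ⟨hf0, hfs⟩ := lemA μ' F hσ hcu humax rfl
    set f := vmap F u with hfdef
    have hfI : f ∈ idealI F := vmap_mem F u
    -- Step 2: take `t₀` minimal.
    set T : Set (Mon n) := {t | ∃ f : MvPolynomial (Fin n) k,
      f ∈ idealI F ∧ f ≠ 0 ∧ pLT μ f = t ∧ sig μ' F f = σ} with hT
    have hTne : T.Nonempty := ⟨pLT μ f, f, hfI, hf0, rfl, hfs⟩
    set t₀ := (mu_wf μ).min T hTne with ht₀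
    obtain ⟨f₀, hf₀I, hf₀0, hf₀t, hf₀s⟩ := (mu_wf μ).min_mem T hTne
    rw [← ht₀] at hf₀t
    have hmin : ∀ t : Mon n,
        (∃ f : MvPolynomial (Fin n) k,
          f ∈ idealI F ∧ f ≠ 0 ∧ pLT μ f = t ∧ sig μ' F f = σ) → μ.ord.le t₀ t := by
      intro t ht
      exact (@not_lt _ μ.ord _ _).1 ((mu_wf μ).not_lt_min T ht)
    refine ⟨t₀, ⟨f₀, hf₀I, hf₀0, hf₀t, hf₀s⟩, hmin, ?_⟩
    -- Step 3: `phi t₀ = σ`.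
    have ht₀LTI : t₀ ∈ LTIdeal μ F := ⟨f₀, hf₀I, hf₀0, hf₀t⟩
    have hle : μ'.ord.le (phi μ μ' F t₀) σ := hf₀s ▸ phi_le μ μ' F hf₀I hf₀0 hf₀t
    by_contra hne
    have hlt : μ'.ord.lt (phi μ μ' F t₀) σ :=
      @lt_of_le_of_ne _ μ'.ord.toPartialOrder _ _ hle hne
    obtain ⟨f', hf'I, hf'0, hf't, hf's⟩ := phi_spec μ μ' F ht₀LTI
    obtain ⟨u₀, hu₀0, hu₀v, hu₀LT⟩ := sig_spec μ' F hf₀I hf₀0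
    obtain ⟨u', hu'0, hu'v, hu'LT⟩ := sig_spec μ' F hf'I hf'0
    rw [hf₀s] at hu₀LT
    rw [hf's] at hu'LT
    set c := f₀.coeff t₀ / f'.coeff t₀ with hc
    set d := comb c u₀ u' with hd
    have hσu' : σ ∉ msupport u' := fun h =>
      absurd hlt ((@not_lt _ μ'.ord _ _).2 (hu'LT ▸ le_mLT' μ' h))
    have hcd : mcoeff σ d ≠ 0 := by
      rw [mem_msupport, not_not] at hσu'
      rw [hd, mcoeff_comb, hσu', mul_zero, sub_zero]
      exact mem_msupport.1 (hu₀LT ▸ mLT_mem' μ' hu₀0)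
    have hdmax : ∀ τ ∈ msupport d, μ'.ord.le τ σ := by
      intro τ hτ
      rcases Finset.mem_union.1 (msupport_comb_subset hτ) with h | h
      · exact hu₀LT ▸ le_mLT' μ' h
      · exact @le_of_lt _ μ'.ord.toPreorder _ _
          (@lt_of_le_of_lt _ μ'.ord.toPreorder _ _ _ (hu'LT ▸ le_mLT' μ' h) hlt)
    obtain ⟨hg0, hgs⟩ := lemA μ' F hσ hcd hdmax (f := vmap F d) rfl
    set g := vmap F d with hgdef
    have hgval : g = f₀ - MvPolynomial.C c * f' := by
      rw [hgdef, hd, vmap_comb, hu₀v, hu'v]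
    have hgI : g ∈ idealI F := vmap_mem F d
    have hf't0 : f'.coeff t₀ ≠ 0 := by
      have h := pLT_mem' μ hf'0
      rw [hf't] at h
      exact MvPolynomial.mem_support_iff.1 h
    have hgt0 : g.coeff t₀ = 0 := by
      rw [hgval, MvPolynomial.coeff_sub, MvPolynomial.coeff_C_mul, hc,
        div_mul_cancel₀ _ hf't0, sub_self]
    have hgmax : ∀ s ∈ g.support, μ.ord.le s t₀ := by
      intro s hs
      rw [MvPolynomial.mem_support_iff, hgval, MvPolynomial.coeff_sub,
        MvPolynomial.coeff_C_mul] at hs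
      by_cases h1 : f₀.coeff s = 0
      · have h2 : f'.coeff s ≠ 0 := fun h => hs (by rw [h1, h, mul_zero, sub_zero])
        exact hf't ▸ le_pLT' μ (MvPolynomial.mem_support_iff.2 h2)
      · exact hf₀t ▸ le_pLT' μ (MvPolynomial.mem_support_iff.2 h1)
    have hglt : μ.ord.lt (pLT μ g) t₀ := pLT_lt' μ hg0 hgmax
      (fun h => MvPolynomial.mem_support_iff.1 h hgt0)
    have hmem : pLT μ g ∈ T := ⟨g, hgI, hg0, rfl, hgs⟩
    exact (mu_wf μ).not_lt_min T hmem hglt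
  refine ⟨⟨?_, ?_, ?_⟩, key2⟩
  · -- MapsTo
    intro t ht
    obtain ⟨f, hfI, hf0, _, hfs⟩ := phi_spec μ μ' F ht
    exact hfs ▸ sig_not_mem_LTSyz μ' F hfI hf0
  · -- InjOn
    have key : ∀ t₁ t₂ : Mon n, t₁ ∈ LTIdeal μ F → t₂ ∈ LTIdeal μ F →
        phi μ μ' F t₁ = phi μ μ' F t₂ → μ.ord.lt t₁ t₂ → False := by
      intro t₁ t₂ h₁ h₂ heq hlt12
      obtain ⟨f₁, hf₁I, hf₁0, hf₁t, hf₁s⟩ := phi_spec μ μ' F h₁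
      obtain ⟨f₂, hf₂I, hf₂0, hf₂t, hf₂s⟩ := phi_spec μ μ' F h₂
      set σ := phi μ μ' F t₂ with hσ
      rw [heq] at hf₁s
      obtain ⟨u₁, hu₁0, hu₁v, hu₁LT⟩ := sig_spec μ' F hf₁I hf₁0
      obtain ⟨u₂, hu₂0, hu₂v, hu₂LT⟩ := sig_spec μ' F hf₂I hf₂0
      rw [hf₁s] at hu₁LT
      rw [hf₂s] at hu₂LT
      have ha₁ : mcoeff σ u₁ ≠ 0 := mem_msupport.1 (hu₁LT ▸ mLT_mem' μ' hu₁0)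
      set c := mcoeff σ u₂ / mcoeff σ u₁ with hc
      set d := comb c u₂ u₁ with hd
      set g := vmap F d with hg
      have hgval : g = f₂ - MvPolynomial.C c * f₁ := by
        rw [hg, hd, vmap_comb, hu₂v, hu₁v]
      have hgI : g ∈ idealI F := vmap_mem F d
      have ht₂f₁ : f₁.coeff t₂ = 0 := by
        by_contra h
        have h1 := le_pLT' μ (MvPolynomial.mem_support_iff.2 h)
        rw [hf₁t] at h1
        exact absurd hlt12 ((@not_lt _ μ.ord _ _).2 h1)
      have hgt₂ : g.coeff t₂ ≠ 0 := by
        rw [hgval, MvPolynomial.coeff_sub, MvPolynomial.coeff_C_mul, ht₂f₁, mul_zero, sub_zero]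
        have h := pLT_mem' μ hf₂0
        rw [hf₂t] at h
        exact MvPolynomial.mem_support_iff.1 h
      have hg0 : g ≠ 0 := fun h => hgt₂ (by rw [h]; simp)
      have hgmax : ∀ s ∈ g.support, μ.ord.le s t₂ := by
        intro s hs
        rw [MvPolynomial.mem_support_iff, hgval, MvPolynomial.coeff_sub,
          MvPolynomial.coeff_C_mul] at hs
        by_cases h1 : f₂.coeff s = 0
        · have h2 : f₁.coeff s ≠ 0 := fun h => hs (by rw [h1, h, mul_zero, sub_zero])
          have h3 := le_pLT' μ (MvPolynomial.mem_support_iff.2 h2)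
          rw [hf₁t] at h3
          exact @le_of_lt _ μ.ord.toPreorder _ _
            (@lt_of_le_of_lt _ μ.ord.toPreorder _ _ _ h3 hlt12)
        · exact hf₂t ▸ le_pLT' μ (MvPolynomial.mem_support_iff.2 h1)
      have hgLT : pLT μ g = t₂ := @le_antisymm _ μ.ord.toPartialOrder _ _
        (hgmax _ (pLT_mem' μ hg0)) (le_pLT' μ (MvPolynomial.mem_support_iff.2 hgt₂))
      have hcd : mcoeff σ d = 0 := by
        rw [hd, mcoeff_comb, hc, div_mul_cancel₀ _ ha₁, sub_self]
      have hd0 : d ≠ 0 := fun h => hg0 (by rw [hg, h, vmap_zero])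
      have hdmax : ∀ τ ∈ msupport d, μ'.ord.le τ σ := by
        intro τ hτ
        rcases Finset.mem_union.1 (msupport_comb_subset hτ) with h | h
        · exact hu₂LT ▸ le_mLT' μ' h
        · exact hu₁LT ▸ le_mLT' μ' h
      have hdlt : μ'.ord.lt (mLT μ' d) σ := mLT_lt' μ' hd0 hdmax
        (fun h => mem_msupport.1 h hcd)
      have h5 : μ'.ord.le (sig μ' F g) (mLT μ' d) := sig_le μ' F hd0 hg.symm
      have h6 : μ'.ord.le (phi μ μ' F t₂) (sig μ' F g) := phi_le μ μ' F hgI hg0 hgLT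
      have h7 : μ'.ord.lt (phi μ μ' F t₂) σ :=
        @lt_of_le_of_lt _ μ'.ord.toPreorder _ _ _
          (@le_trans _ μ'.ord.toPreorder _ _ _ h6 h5) hdlt
      exact absurd h7 (@lt_irrefl _ μ'.ord.toPreorder σ)
    intro t₁ h₁ t₂ h₂ heq
    by_contra hne
    rcases @Ne.lt_or_gt _ μ.ord _ _ hne with h | h
    · exact (key t₁ t₂ h₁ h₂ heq h).elim
    · exact (key t₂ t₁ h₂ h₁ heq.symm h).elim
  · -- SurjOn
    intro σ hσ
    obtain ⟨t₀, ⟨f₀, hf₀I, hf₀0, hf₀t, _⟩, _, hphi⟩ := key2 σ hσ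
    exact ⟨t₀, ⟨f₀, hf₀I, hf₀0, hf₀t⟩, hphi⟩
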